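/- arXiv:2503.20694 — 2 statements merged into one kernel-verified Lean document; each statement's English description precedes it below -/
import Mathlib

section
/- The scaled delay Vandermonde matrix admits the sparse factorization Ã_N = D̂_N · Jᵀ · F_M* · D̆_M · F_M · J · D̂_N, where M = 2N, D̂_N = diag(β^{k²})_{k=0}^{N-1} for β with β² = α, D̆_M = diag(√M · F_M c) with c the first column of the circulant embedding of the Toeplitz matrix with entries β^{-(k-l)²}, and J = [I_N; 0_N]; here Ã_N has entries α^{kl}. -/
open Complex

private lemma geom_aux (M : ℕ) (e : ℂ) (hprim : IsPrimitiveRoot e M) (t : ℤ) :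
    (∑ j : Fin M, e ^ ((j : ℤ) * t)) = if (M : ℤ) ∣ t then (M : ℂ) else 0 := by
  by_cases h : (M : ℤ) ∣ t
  · simp only [h, if_true]
    have h1 : ∀ j : Fin M, e ^ ((j : ℤ) * t) = 1 := fun j =>
      (hprim.zpow_eq_one_iff_dvd _).2 (h.mul_left _)
    simp [h1]
  · simp only [h, if_false]
    have hz1 : e ^ t ≠ 1 := fun h1 => h ((hprim.zpow_eq_one_iff_dvd t).1 h1)
    have h2 : ∀ j : Fin M, e ^ ((j : ℤ) * t) = (e ^ t) ^ (j : ℕ) := by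
      intro j
      rw [← zpow_natCast (e ^ t) (j : ℕ), ← zpow_mul]
      ring_nf
    simp_rw [h2]
    rw [Fin.sum_univ_eq_sum_range (fun j => (e ^ t) ^ j) M, geom_sum_eq hz1]
    have h3 : (e ^ t) ^ M = 1 := by
      rw [← zpow_natCast (e ^ t) M, ← zpow_mul]
      exact (hprim.zpow_eq_one_iff_dvd _).2 (dvd_mul_left _ _)
    rw [h3]; simp

/-- Sparse factorization of the scaled delay Vandermonde matrix:
`Ã_N = D̂_N · Jᵀ · F_M* · D̆_M · F_M · J · D̂_N` with `M = 2N`,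
`D̂_N = diag(β^{k²})`, `D̆_M = diag(√M · F_M c)` with `c` the circulant first column,
and `J = [I_N; 0_N]`. -/
theorem dvm_sparse_factorization (N : ℕ) (hN : 1 ≤ N) (α β : ℂ) (hα : α ≠ 0)
    (hβ : β ^ 2 = α)
    (A : Matrix (Fin N) (Fin N) ℂ)
    (hA : ∀ k l : Fin N, A k l = α ^ ((k : ℤ) * (l : ℤ)))
    (F : Matrix (Fin (2 * N)) (Fin (2 * N)) ℂ)
    (hF : ∀ k l : Fin (2 * N), F k l =
      (1 / (Real.sqrt (2 * N) : ℂ)) *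
        Complex.exp (-2 * Real.pi * I / (2 * N)) ^ ((k : ℕ) * (l : ℕ)))
    (c : Fin (2 * N) → ℂ)
    (hc₁ : ∀ m : Fin (2 * N), (m : ℕ) < N → c m = β ^ (-(m : ℤ) ^ 2))
    (hc₂ : ∀ m : Fin (2 * N), (m : ℕ) = N → c m = 1)
    (hc₃ : ∀ m : Fin (2 * N), N < (m : ℕ) → c m = β ^ (-(2 * (N : ℤ) - (m : ℤ)) ^ 2))
    (J : Matrix (Fin (2 * N)) (Fin N) ℂ)
    (hJ : ∀ k l, J k l = if (k : ℕ) = (l : ℕ) then 1 else 0) :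
    A = Matrix.diagonal (fun k : Fin N => β ^ ((k : ℤ) ^ 2)) * J.transpose *
        F.conjTranspose *
        Matrix.diagonal (fun l : Fin (2 * N) => (Real.sqrt (2 * N) : ℂ) * (F.mulVec c) l) *
        F * J * Matrix.diagonal (fun k : Fin N => β ^ ((k : ℤ) ^ 2)) := by
  have hβ0 : β ≠ 0 := by
    intro h; apply hα; rw [← hβ, h]; ring
  have hN2 : (2 * N : ℕ) ≠ 0 := by omega
  set e : ℂ := Complex.exp (-2 * Real.pi * I / (2 * N)) with he_def
  set s : ℂ := (Real.sqrt (2 * N) : ℂ) with hs_def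
  have hMR : (0 : ℝ) < 2 * (N : ℝ) := by
    have : (1 : ℝ) ≤ (N : ℝ) := by exact_mod_cast hN
    linarith
  have hsR : Real.sqrt (2 * N) ≠ 0 := by
    positivity
  have hs0 : s ≠ 0 := by
    simpa [hs_def] using hsR
  have hsq : s * s = (2 * (N : ℂ)) := by
    rw [hs_def, ← Complex.ofReal_mul, Real.mul_self_sqrt (le_of_lt hMR)]
    push_cast; ring
  have hprim : IsPrimitiveRoot e (2 * N) := by
    have h := (Complex.isPrimitiveRoot_exp (2 * N) hN2).inv
    have he : e = (Complex.exp (2 * Real.pi * I / ((2 * N : ℕ) : ℂ)))⁻¹ := by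
      rw [← Complex.exp_neg, he_def]
      congr 1
      push_cast; ring
    rw [he]; exact h
  have he0 : e ≠ 0 := Complex.exp_ne_zero _
  have hconj : (starRingEnd ℂ) e = e⁻¹ := by
    rw [he_def, ← Complex.exp_conj, ← Complex.exp_neg]
    congr 1
    simp only [map_div₀, map_mul, map_neg, map_ofNat, Complex.conj_I,
      Complex.conj_ofReal, map_natCast]
    ring
  have hF' : ∀ j m : Fin (2 * N), F j m = (1 / s) * e ^ ((j : ℤ) * (m : ℤ)) := by
    intro j m
    have hcast : (((j : ℕ) * (m : ℕ) : ℕ) : ℤ) = (j : ℤ) * (m : ℤ) := by push_cast; ring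
    rw [hF j m, ← zpow_natCast e ((j : ℕ) * (m : ℕ)), hcast]
  have hFc : ∀ j m : Fin (2 * N),
      (starRingEnd ℂ) (F j m) = (1 / s) * e ^ (-((j : ℤ) * (m : ℤ))) := by
    intro j m
    rw [hF' j m, map_mul, map_zpow₀, hconj, inv_zpow, ← zpow_neg]
    congr 1
    rw [hs_def]
    simp [map_div₀, Complex.conj_ofReal]
  have hdd : ∀ j : Fin (2 * N),
      s * (F.mulVec c) j = ∑ p : Fin (2 * N), e ^ ((j : ℤ) * (p : ℤ)) * c p := by
    intro j
    simp only [Matrix.mulVec, dotProduct]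
    rw [Finset.mul_sum]
    refine Finset.sum_congr rfl fun p _ => ?_
    rw [hF' j p]
    field_simp
  -- embed Fin N into Fin (2N)
  have hemb : ∀ k : Fin N, ((k : ℕ) : ℕ) < 2 * N := fun k => by omega
  apply Matrix.ext
  intro k l
  set k' : Fin (2 * N) := ⟨(k : ℕ), by omega⟩ with hk'
  set l' : Fin (2 * N) := ⟨(l : ℕ), by omega⟩ with hl'
  -- step 1: collapse J's
  have hT : ∀ m : Fin (2 * N),
      (Matrix.diagonal (fun k : Fin N => β ^ ((k : ℤ) ^ 2)) * J.transpose *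
        F.conjTranspose) k m = β ^ ((k : ℤ) ^ 2) * (starRingEnd ℂ) (F m k') := by
    intro m
    rw [Matrix.mul_apply]
    rw [Finset.sum_eq_single k']
    · rw [Matrix.diagonal_mul, Matrix.transpose_apply, hJ, Matrix.conjTranspose_apply]
      simp [hk']
    · intro b _ hb
      rw [Matrix.diagonal_mul, Matrix.transpose_apply, hJ, if_neg, mul_zero, zero_mul]
      intro hbk
      exact hb (Fin.ext (by simpa [hk'] using hbk))
    · simp
  have hQ : ∀ (X : Matrix (Fin N) (Fin (2 * N)) ℂ), (X * J) k l = X k l' := by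
    intro X
    rw [Matrix.mul_apply]
    rw [Finset.sum_eq_single l']
    · rw [hJ]; simp [hl']
    · intro b _ hb
      rw [hJ, if_neg, mul_zero]
      intro hbl
      exact hb (Fin.ext (by simpa [hl'] using hbl))
    · simp
  rw [hA, Matrix.mul_diagonal, hQ, Matrix.mul_apply]
  -- now goal : α ^ (k*l) = (∑ j, (D Jᵀ F* D̆) k j * F j l') * β^(l²)
  have hstep : ∀ j : Fin (2 * N),
      (Matrix.diagonal (fun k : Fin N => β ^ ((k : ℤ) ^ 2)) * J.transpose *
        F.conjTranspose *
        Matrix.diagonal (fun l : Fin (2 * N) => s * (F.mulVec c) l)) k j * F j l' =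
      ∑ p : Fin (2 * N),
        (β ^ ((k : ℤ) ^ 2) * ((1 / s) * (1 / s)) * c p) *
          e ^ ((j : ℤ) * ((p : ℤ) + (l : ℤ) - (k : ℤ))) := by
    intro j
    rw [Matrix.mul_diagonal, hT, hFc, hdd, hF' j l']
    rw [show ((l' : ℤ)) = (l : ℤ) from by simp [hl'], show ((k' : ℤ)) = (k : ℤ) from by simp [hk']]
    rw [Finset.mul_sum, Finset.sum_mul]
    refine Finset.sum_congr rfl fun p _ => ?_
    have hexp : e ^ ((j : ℤ) * ((p : ℤ) + (l : ℤ) - (k : ℤ))) =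
        e ^ (-((j : ℤ) * (k : ℤ))) * (e ^ ((j : ℤ) * (p : ℤ)) * e ^ ((j : ℤ) * (l : ℤ))) := by
      rw [← zpow_add₀ he0, ← zpow_add₀ he0]
      congr 1; ring
    rw [hexp]; ring
  simp_rw [hstep]
  rw [Finset.sum_comm]
  have hswap : ∀ p : Fin (2 * N),
      (∑ j : Fin (2 * N),
        (β ^ ((k : ℤ) ^ 2) * ((1 / s) * (1 / s)) * c p) *
          e ^ ((j : ℤ) * ((p : ℤ) + (l : ℤ) - (k : ℤ)))) =
      (β ^ ((k : ℤ) ^ 2) * ((1 / s) * (1 / s)) * c p) *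
        (if ((2 * N : ℕ) : ℤ) ∣ ((p : ℤ) + (l : ℤ) - (k : ℤ)) then ((2 * N : ℕ) : ℂ) else 0) := by
    intro p
    rw [← Finset.mul_sum, geom_aux (2 * N) e hprim]
  simp_rw [hswap]
  -- now pick p₀
  have key : ∀ p₀ : Fin (2 * N),
      ((2 * N : ℕ) : ℤ) ∣ ((p₀ : ℤ) + (l : ℤ) - (k : ℤ)) →
      (∑ p : Fin (2 * N),
        (β ^ ((k : ℤ) ^ 2) * ((1 / s) * (1 / s)) * c p) *
          (if ((2 * N : ℕ) : ℤ) ∣ ((p : ℤ) + (l : ℤ) - (k : ℤ)) then ((2 * N : ℕ) : ℂ) else 0)) =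
      β ^ ((k : ℤ) ^ 2) * c p₀ := by
    intro p₀ hdvd
    rw [Finset.sum_eq_single p₀]
    · rw [if_pos hdvd]
      have h1 : ((1 : ℂ) / s) * (1 / s) * ((2 * N : ℕ) : ℂ) = 1 := by
        have h2 : ((2 * N : ℕ) : ℂ) = s * s := by rw [hsq]; push_cast; ring
        rw [h2]; field_simp
      calc β ^ ((k : ℤ) ^ 2) * ((1 / s) * (1 / s)) * c p₀ * ((2 * N : ℕ) : ℂ)
          = β ^ ((k : ℤ) ^ 2) * c p₀ * (((1 : ℂ) / s) * (1 / s) * ((2 * N : ℕ) : ℂ)) := by ring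
        _ = β ^ ((k : ℤ) ^ 2) * c p₀ := by rw [h1, mul_one]
    · intro p _ hp
      rw [if_neg, mul_zero]
      intro hdvd'
      apply hp
      have hdiff : ((2 * N : ℕ) : ℤ) ∣ ((p : ℤ) - (p₀ : ℤ)) := by
        have := dvd_sub hdvd' hdvd
        simpa using this
      have hz : ((p : ℤ) - (p₀ : ℤ)) = 0 := by
        refine Int.eq_zero_of_dvd_of_natAbs_lt_natAbs hdiff ?_
        have h1 : (p : ℕ) < 2 * N := p.isLt
        have h2 : (p₀ : ℕ) < 2 * N := p₀.isLt
        omega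
      exact Fin.ext (by omega)
    · simp
  rcases le_or_gt (l : ℕ) (k : ℕ) with hkl | hkl
  · -- p₀ = k - l
    set p₀ : Fin (2 * N) := ⟨(k : ℕ) - (l : ℕ), by omega⟩ with hp₀
    have hdvd : ((2 * N : ℕ) : ℤ) ∣ ((p₀ : ℤ) + (l : ℤ) - (k : ℤ)) := by
      have : ((p₀ : ℤ) + (l : ℤ) - (k : ℤ)) = 0 := by
        have : ((p₀ : ℕ) : ℤ) = (k : ℤ) - (l : ℤ) := by
          simp only [hp₀]
          omega
        omega
      rw [this]; exact dvd_zero _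
    rw [key p₀ hdvd]
    have hcp : c p₀ = β ^ (-(((k : ℤ) - (l : ℤ)) ^ 2)) := by
      have hval : ((p₀ : ℕ) : ℤ) = (k : ℤ) - (l : ℤ) := by
        simp only [hp₀]; omega
      rw [hc₁ p₀ (by simp only [hp₀]; omega), hval]
    rw [hcp]
    rw [← zpow_add₀ hβ0, ← zpow_add₀ hβ0]
    have hαβ : α = β ^ (2 : ℤ) := by rw [← hβ]; norm_cast
    rw [hαβ, ← zpow_mul]
    congr 1
    ring
  · -- p₀ = 2N - (l - k)
    set p₀ : Fin (2 * N) := ⟨2 * N - ((l : ℕ) - (k : ℕ)), by omega⟩ with hp₀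
    have hdvd : ((2 * N : ℕ) : ℤ) ∣ ((p₀ : ℤ) + (l : ℤ) - (k : ℤ)) := by
      have : ((p₀ : ℤ) + (l : ℤ) - (k : ℤ)) = ((2 * N : ℕ) : ℤ) := by
        have : ((p₀ : ℕ) : ℤ) = 2 * (N : ℤ) - ((l : ℤ) - (k : ℤ)) := by
          simp only [hp₀]
          omega
        omega
      rw [this]
    rw [key p₀ hdvd]
    have hcp : c p₀ = β ^ (-(((k : ℤ) - (l : ℤ)) ^ 2)) := by
      have hval : ((p₀ : ℕ) : ℤ) = 2 * (N : ℤ) - ((l : ℤ) - (k : ℤ)) := by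
        simp only [hp₀]; omega
      rw [hc₃ p₀ (by simp only [hp₀]; omega)]
      congr 2
      rw [hval]
      ring
    rw [hcp]
    rw [← zpow_add₀ hβ0, ← zpow_add₀ hβ0]
    have hαβ : α = β ^ (2 : ℤ) := by rw [← hβ]; norm_cast
    rw [hαβ, ← zpow_mul]
    congr 1
    ring
end

section
/- The total FLOP count of an StNN with λ recursive steps, #a_λ + #m_λ = p(L−1)[2M²/2^{λ−1} + (7/4)λM + (15/4)M], is strictly less than the fully-connected count Θ(M²L) for sufficiently large M when λ grows like log₂ M; precisely, for λ = log₂ M, #a_λ + #m_λ ≤ C·p·L·M·log₂ M for an explicit constant C, while a fully connected L-layer network with layer widths proportional to M requires at least M² multiplications per layer. -/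
open Filter

/-- Total FLOP count of the StNN with `λ = log₂ M = s` recursive steps:
`#a_λ + #m_λ = p(L−1)(2M²/2^{λ−1} + (7/4)λM + (15/4)M)`; it is bounded by
`C·p·L·M·log₂ M` with the explicit constant `C = 10`, and is asymptotically
negligible compared to the fully connected cost `Θ(M²L)` (which needs `M²`
multiplications per fully connected layer): the ratio tends to `0`. -/
theorem stnn_flops_beat_fully_connected (p L : ℕ) (hp : 1 ≤ p) (hL5 : 5 ≤ L)
    (hL : 4 ∣ (L - 1)) (a m : ℕ → ℝ)
    (ha : ∀ s : ℕ, a s = (p : ℝ) * (L - 1) * ((2 : ℝ) ^ s) ^ 2 / 2 ^ (s - 1) +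
      (p : ℝ) * s * (L - 1) * 2 ^ s + 3 / 4 * p * (L - 1) * 2 ^ s)
    (hm : ∀ s : ℕ, m s = (p : ℝ) * (L - 1) * ((2 : ℝ) ^ s) ^ 2 / 2 ^ (s - 1) +
      3 * p * 2 ^ s * (L - 1) + 3 / 4 * p * s * (L - 1) * 2 ^ s) :
    (∀ s : ℕ, 1 ≤ s → a s + m s =
      (p : ℝ) * (L - 1) * (2 * ((2 : ℝ) ^ s) ^ 2 / 2 ^ (s - 1) +
        7 / 4 * s * 2 ^ s + 15 / 4 * 2 ^ s)) ∧
    (∀ s : ℕ, 1 ≤ s → a s + m s ≤ 10 * (p : ℝ) * L * 2 ^ s * s) ∧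
    Tendsto (fun s : ℕ => (a s + m s) / (((2 : ℝ) ^ s) ^ 2 * L)) atTop (nhds 0) := by
  have hp1 : (1 : ℝ) ≤ (p : ℝ) := by exact_mod_cast hp
  have hL5' : (5 : ℝ) ≤ (L : ℝ) := by exact_mod_cast hL5
  have key : ∀ s : ℕ, 1 ≤ s → a s + m s =
      (p : ℝ) * (L - 1) * (2 * ((2 : ℝ) ^ s) ^ 2 / 2 ^ (s - 1) +
        7 / 4 * s * 2 ^ s + 15 / 4 * 2 ^ s) := by
    intro s hs
    obtain ⟨t, rfl⟩ := Nat.exists_eq_add_of_le hs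
    rw [ha, hm]
    simp only [Nat.add_sub_cancel, Nat.add_sub_cancel_left, Nat.reduceSubDiff]
    have h2t : (2 : ℝ) ^ t ≠ 0 := by positivity
    rw [pow_add]
    push_cast
    field_simp
    ring
  have key2 : ∀ s : ℕ, 1 ≤ s → a s + m s =
      (p : ℝ) * (L - 1) * (2 : ℝ) ^ s * (31 / 4 + 7 / 4 * s) := by
    intro s hs
    rw [key s hs]
    obtain ⟨t, rfl⟩ := Nat.exists_eq_add_of_le hs
    simp only [Nat.add_sub_cancel, Nat.add_sub_cancel_left, Nat.reduceSubDiff]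
    have h2t : (2 : ℝ) ^ t ≠ 0 := by positivity
    rw [pow_add]
    push_cast
    field_simp
    ring
  have bound : ∀ s : ℕ, 1 ≤ s → a s + m s ≤ 10 * (p : ℝ) * L * 2 ^ s * s := by
    intro s hs
    rw [key2 s hs]
    have hs1 : (1 : ℝ) ≤ (s : ℝ) := by exact_mod_cast hs
    have h2s : (0 : ℝ) < 2 ^ s := by positivity
    have h1 : (p : ℝ) * (L - 1) ≤ (p : ℝ) * L := by
      apply mul_le_mul_of_nonneg_left (by linarith) (by linarith)
    have h2 : (31 / 4 : ℝ) + 7 / 4 * s ≤ 10 * s := by linarith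
    calc (p : ℝ) * (L - 1) * (2 : ℝ) ^ s * (31 / 4 + 7 / 4 * s)
        ≤ (p : ℝ) * L * (2 : ℝ) ^ s * (10 * s) := by
          apply mul_le_mul (mul_le_mul_of_nonneg_right h1 h2s.le) h2 (by positivity)
          positivity
      _ = 10 * (p : ℝ) * L * 2 ^ s * s := by ring
  refine ⟨key, bound, ?_⟩
  have hLpos : (0 : ℝ) < (L : ℝ) := by linarith
  apply squeeze_zero' (g := fun s : ℕ => 10 * (p : ℝ) * (s : ℝ) * (1 / 2 : ℝ) ^ s)
  · filter_upwards [eventually_ge_atTop 1] with s hs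
    rw [key2 s hs]
    have hs1 : (1 : ℝ) ≤ (s : ℝ) := by exact_mod_cast hs
    apply div_nonneg _ (by positivity)
    exact mul_nonneg (mul_nonneg (mul_nonneg (by positivity) (by linarith)) (by positivity)) (by linarith)
  · filter_upwards [eventually_ge_atTop 1] with s hs
    rw [div_le_iff₀ (by positivity)]
    calc a s + m s ≤ 10 * (p : ℝ) * L * 2 ^ s * s := bound s hs
      _ = 10 * (p : ℝ) * s * (1 / 2) ^ s * (((2 : ℝ) ^ s) ^ 2 * L) := by
          rw [div_pow, one_pow]
          field_simp
  · have := (tendsto_self_mul_const_pow_of_lt_one (by norm_num : (0:ℝ) ≤ 1/2)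
      (by norm_num : (1/2 : ℝ) < 1)).const_mul (10 * (p : ℝ))
    simpa [mul_assoc] using this
end
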